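/- Let G be a graph, uv ∈ E(G), and let S be a general position set of the double graph D(G). If |S ∩ {u, v, u', v'}| ≥ 2, then |S ∩ {u, v, u', v'}| = 2. -/

import Mathlib

open SimpleGraph

variable {V : Type*}

/-- A walk is a shortest path if it is a path and its length equals the distance
between its endpoints. -/
def SimpleGraph.IsShortestPath (G : SimpleGraph V) {u v : V} (p : G.Walk u v) : Prop :=
  p.IsPath ∧ p.length = G.dist u v

/-- `S` is a general position set: no three vertices of `S` lie on a common shortest path. -/
def SimpleGraph.IsGPSet (G : SimpleGraph V) (S : Set V) : Prop :=
  ∀ ⦃u v : V⦄ (p : G.Walk u v), G.IsShortestPath p →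
    ∀ x ∈ S, ∀ y ∈ S, ∀ z ∈ S, x ≠ y → x ≠ z → y ≠ z →
      ¬ (x ∈ p.support ∧ y ∈ p.support ∧ z ∈ p.support)

/-- `u` and `v` are `S`-visible: some shortest `u,v`-path has no internal vertex in `S`. -/
def SimpleGraph.SVisible (G : SimpleGraph V) (S : Set V) (u v : V) : Prop :=
  ∃ p : G.Walk u v, G.IsShortestPath p ∧ ∀ w ∈ p.support, w ≠ u → w ≠ v → w ∉ S

/-- `S` is a mutual-visibility set. -/
def SimpleGraph.IsMVSet (G : SimpleGraph V) (S : Set V) : Prop :=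
  ∀ u ∈ S, ∀ v ∈ S, u ≠ v → G.SVisible S u v

/-- `S` is a total mutual-visibility set. -/
def SimpleGraph.IsTotalMVSet (G : SimpleGraph V) (S : Set V) : Prop :=
  ∀ u v : V, u ≠ v → G.SVisible S u v

/-- `S` is an outer mutual-visibility set. -/
def SimpleGraph.IsOuterMVSet (G : SimpleGraph V) (S : Set V) : Prop :=
  G.IsMVSet S ∧ ∀ u ∈ S, ∀ v ∉ S, u ≠ v → G.SVisible S u v

/-- The mutual-visibility number `μ(G)`. -/
noncomputable def SimpleGraph.mutualVisibilityNumber (G : SimpleGraph V) [Fintype V] : ℕ :=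
  sSup {k | ∃ S : Finset V, G.IsMVSet ↑S ∧ S.card = k}

/-- The total mutual-visibility number `μ_t(G)`. -/
noncomputable def SimpleGraph.totalMutualVisibilityNumber (G : SimpleGraph V) [Fintype V] : ℕ :=
  sSup {k | ∃ S : Finset V, G.IsTotalMVSet ↑S ∧ S.card = k}

/-- The outer mutual-visibility number `μ_o(G)`. -/
noncomputable def SimpleGraph.outerMutualVisibilityNumber (G : SimpleGraph V) [Fintype V] : ℕ :=
  sSup {k | ∃ S : Finset V, G.IsOuterMVSet ↑S ∧ S.card = k}

/-- The general position number `gp(G)`. -/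
noncomputable def SimpleGraph.gpNumber (G : SimpleGraph V) [Fintype V] : ℕ :=
  sSup {k | ∃ S : Finset V, G.IsGPSet ↑S ∧ S.card = k}

/-- The double graph `D(G)`: two copies of each vertex, `(u, b)` adjacent to `(v, c)`
iff `u` adjacent to `v` in `G`. -/
def SimpleGraph.doubleGraph (G : SimpleGraph V) : SimpleGraph (V × Bool) where
  Adj x y := G.Adj x.1 y.1
  symm := ⟨fun _ _ h => G.adj_symm h⟩
  loopless := ⟨fun x h => G.irrefl (v := x.1) h⟩

/-- The Mycielskian `M(G)`: `some (u, false)` are the original vertices, `some (u, true)`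
their copies, and `none` is the apex vertex `v*`. -/
def SimpleGraph.mycielskian (G : SimpleGraph V) : SimpleGraph (Option (V × Bool)) where
  Adj x y := match x, y with
    | some (u, false), some (v, false) => G.Adj u v
    | some (u, false), some (v, true) => G.Adj u v
    | some (u, true), some (v, false) => G.Adj u v
    | some (_, true), none => True
    | none, some (_, true) => True
    | _, _ => False
  symm := ⟨by
    rintro (_ | ⟨u, (_|_)⟩) (_ | ⟨v, (_|_)⟩) h <;>
      first
        | exact h
        | exact G.adj_symm h⟩
  loopless := ⟨by
    rintro (_ | ⟨u, (_|_)⟩) h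
    · exact h
    · exact G.irrefl h
    · exact h⟩


lemma gp_key {G : SimpleGraph V} {S : Finset (V × Bool)}
    (hS : (G.doubleGraph).IsGPSet ↑S) {a b c : V × Bool}
    (hab : G.doubleGraph.Adj a b) (hbc : G.doubleGraph.Adj b c)
    (hac : ¬ G.doubleGraph.Adj a c) (hne : a ≠ c) :
    ¬(a ∈ S ∧ b ∈ S ∧ c ∈ S) := by
  rintro ⟨ha, hb, hc⟩
  set H := G.doubleGraph
  let p : H.Walk a c := .cons hab (.cons hbc .nil)
  have hsup : p.support = [a, b, c] := rfl
  have hpath : p.IsPath := by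
    rw [SimpleGraph.Walk.isPath_def, hsup]
    simp [hab.ne, hbc.ne, hne]
  have hle : H.dist a c ≤ 2 := by
    have := SimpleGraph.dist_le p
    simpa [p] using this
  have h0 : H.dist a c ≠ 0 := by
    intro h
    rcases (SimpleGraph.dist_eq_zero_iff_eq_or_not_reachable).1 h with h | h
    · exact hne h
    · exact h ⟨p⟩
  have h1 : H.dist a c ≠ 1 := by
    intro h
    exact hac ((SimpleGraph.dist_eq_one_iff_adj).1 h)
  have hdist : H.dist a c = 2 := by omega
  have hlen : p.length = H.dist a c := by simp [p, hdist]
  exact hS p ⟨hpath, hlen⟩ a ha b hb c hc hab.ne hne hbc.ne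
    ⟨by simp [hsup], by simp [hsup], by simp [hsup]⟩

set_option maxHeartbeats 1000000 in
theorem gp_double_twins [DecidableEq V] (G : SimpleGraph V) (u v : V) (huv : G.Adj u v)
    (S : Finset (V × Bool)) (hS : G.doubleGraph.IsGPSet ↑S)
    (h2 : 2 ≤ (S ∩ {(u, false), (v, false), (u, true), (v, true)}).card) :
    (S ∩ {(u, false), (v, false), (u, true), (v, true)}).card = 2 := by
  by_contra hne2
  have h3 : 2 < (S ∩ {(u, false), (v, false), (u, true), (v, true)}).card :=
    lt_of_le_of_ne h2 (Ne.symm hne2)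
  obtain ⟨x, hx, y, hy, z, hz, hxy, hxz, hyz⟩ := Finset.two_lt_card.1 h3
  have huvne : u ≠ v := huv.ne
  have hA : ∀ (b c : Bool), G.doubleGraph.Adj (u, b) (v, c) := fun _ _ => huv
  have hA' : ∀ (b c : Bool), G.doubleGraph.Adj (v, b) (u, c) := fun _ _ => huv.symm
  have hNu : ∀ (b c : Bool), ¬ G.doubleGraph.Adj (u, b) (u, c) := fun _ _ h => G.irrefl (v := u) h
  have hNv : ∀ (b c : Bool), ¬ G.doubleGraph.Adj (v, b) (v, c) := fun _ _ h => G.irrefl (v := v) h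
  have K1 := gp_key hS (hA false false) (hA' false true) (hNu false true) (by simp)
  have K2 := gp_key hS (hA' false false) (hA false true) (hNv false true) (by simp)
  have K3 := gp_key hS (hA false true) (hA' true true) (hNu false true) (by simp)
  have K4 := gp_key hS (hA' false true) (hA true true) (hNv false true) (by simp)
  rw [Finset.mem_inter] at hx hy hz
  obtain ⟨hxS, hxT⟩ := hx
  obtain ⟨hyS, hyT⟩ := hy
  obtain ⟨hzS, hzT⟩ := hz
  simp only [Finset.mem_insert, Finset.mem_singleton] at hxT hyT hzT
  rcases hxT with rfl | rfl | rfl | rfl <;>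
    rcases hyT with rfl | rfl | rfl | rfl <;>
      rcases hzT with rfl | rfl | rfl | rfl <;>
        tauto
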